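/- Let V be a finite set and let F : 2^V → ℝ be a monotone nondecreasing submodular set function with F(∅) = 0. Fix n ≥ 1 and let P_0 = ∅ and, for i = 1, …, n, let P_i = P_{i−1} ∪ {v_i} where v_i ∈ V \ P_{i−1} maximizes the marginal gain, i.e. F(P_{i−1} ∪ {v_i}) − F(P_{i−1}) ≥ F(P_{i−1} ∪ {v}) − F(P_{i−1}) for every v ∈ V \ P_{i−1} (assume |V| ≥ n so such elements exist). Then the greedy solution satisfies F(P_n) ≥ (1 − 1/e) · max{ F(S) : S ⊆ V, |S| ≤ n }. -/

import Mathlib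

/-- A set function `F` on subsets of a finite ground set is submodular if for all
subsets `R ⊆ P` and every element `v ∉ P`,
`F (P ∪ {v}) - F P ≤ F (R ∪ {v}) - F R`. -/
def Submodular {V : Type*} [DecidableEq V] (F : Finset V → ℝ) : Prop :=
  ∀ R P : Finset V, R ⊆ P → ∀ v : V, v ∉ P →
    F (insert v P) - F P ≤ F (insert v R) - F R

lemma submodular_telescope {V : Type*} [DecidableEq V] (F : Finset V → ℝ)
    (hsub : Submodular F) :
    ∀ T A : Finset V, Disjoint T A →
      F (A ∪ T) - F A ≤ ∑ u ∈ T, (F (insert u A) - F A) := by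
  intro T
  induction T using Finset.induction_on with
  | empty => simp
  | @insert a s ha ih =>
    intro A hd
    have haA : a ∉ A := by
      have := Finset.disjoint_left.mp hd (Finset.mem_insert_self a s)
      exact this
    have hdsA : Disjoint s A :=
      Finset.disjoint_of_subset_left (Finset.subset_insert a s) hd
    have haAs : a ∉ A ∪ s := by
      simp [haA, ha]
    have h1 : F (insert a (A ∪ s)) - F (A ∪ s) ≤ F (insert a A) - F A :=
      hsub A (A ∪ s) Finset.subset_union_left a haAs
    have h2 := ih A hdsA
    have heq : A ∪ insert a s = insert a (A ∪ s) := by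
      ext x; simp [Finset.mem_insert, Finset.mem_union]
    rw [heq, Finset.sum_insert ha]
    linarith

/-- The greedy algorithm for maximizing a monotone nondecreasing submodular set
function `F` with `F ∅ = 0` under a cardinality constraint `n` achieves at
least a `(1 - 1/e)` fraction of the optimum: if `P 0 = ∅` and at each step
`i < n` the element `v i ∉ P i` of maximal marginal gain is added, then
`F (P n) ≥ (1 - 1/e) * F S` for every `S ⊆ V` with `|S| ≤ n`. -/
theorem greedy_submodular_approx {V : Type*} [Fintype V] [DecidableEq V]
    (F : Finset V → ℝ)
    (hmono : ∀ R P : Finset V, R ⊆ P → F R ≤ F P)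
    (hsub : Submodular F)
    (hempty : F ∅ = 0)
    (n : ℕ) (hn : 1 ≤ n) (hcard : n ≤ Fintype.card V)
    (P : ℕ → Finset V) (v : ℕ → V)
    (hP0 : P 0 = ∅)
    (hvmem : ∀ i < n, v i ∉ P i)
    (hstep : ∀ i < n, P (i + 1) = insert (v i) (P i))
    (hgreedy : ∀ i < n, ∀ u : V, u ∉ P i →
      F (insert u (P i)) - F (P i) ≤ F (insert (v i) (P i)) - F (P i)) :
    ∀ S : Finset V, S.card ≤ n →
      (1 - 1 / Real.exp 1) * F S ≤ F (P n) := by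
  intro S hS
  have hnpos : (0:ℝ) < n := by exact_mod_cast hn
  have hn1 : (1:ℝ) ≤ n := by exact_mod_cast hn
  have hFS0 : 0 ≤ F S := by
    have := hmono ∅ S (Finset.empty_subset S); linarith [this, hempty.le]
  have gnonneg : ∀ i < n, 0 ≤ F (P (i+1)) - F (P i) := by
    intro i hi
    rw [hstep i hi]
    have := hmono (P i) (insert (v i) (P i)) (Finset.subset_insert _ _)
    linarith
  have key : ∀ i < n, F S - F (P i) ≤ (n:ℝ) * (F (P (i+1)) - F (P i)) := by
    intro i hi
    set g := F (P (i+1)) - F (P i) with hg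
    have hdis : Disjoint (S \ P i) (P i) := Finset.sdiff_disjoint
    have h1 : F S ≤ F (P i ∪ (S \ P i)) := by
      apply hmono
      intro x hx
      by_cases hxp : x ∈ P i <;> simp [Finset.mem_union, Finset.mem_sdiff, hx, hxp]
    have h2 := submodular_telescope F hsub (S \ P i) (P i) hdis
    have h3 : ∑ u ∈ S \ P i, (F (insert u (P i)) - F (P i)) ≤ (S \ P i).card * g := by
      calc ∑ u ∈ S \ P i, (F (insert u (P i)) - F (P i)) ≤ ∑ _u ∈ S \ P i, g := by
            apply Finset.sum_le_sum
            intro u hu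
            have hu' : u ∉ P i := (Finset.mem_sdiff.mp hu).2
            simpa [hg, hstep i hi] using hgreedy i hi u hu'
        _ = (S \ P i).card * g := by rw [Finset.sum_const, nsmul_eq_mul]
    have h4 : ((S \ P i).card : ℝ) * g ≤ (n:ℝ) * g := by
      apply mul_le_mul_of_nonneg_right _ (gnonneg i hi)
      have : (S \ P i).card ≤ n := le_trans (Finset.card_le_card (Finset.sdiff_subset)) hS
      exact_mod_cast this
    calc F S - F (P i) ≤ F (P i ∪ (S \ P i)) - F (P i) := by linarith
      _ ≤ _ := h2
      _ ≤ _ := h3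
      _ ≤ _ := h4
  have ind : ∀ i ≤ n, F S - F (P i) ≤ (1 - 1/(n:ℝ))^i * F S := by
    intro i hi
    induction i with
    | zero => simp [hP0, hempty]
    | succ i ih =>
      have hi' : i < n := hi
      have ih' := ih (le_of_lt hi')
      set a := F S - F (P i) with ha
      set g := F (P (i+1)) - F (P i) with hg
      have hkey : a ≤ (n:ℝ) * g := key i hi'
      have hga : a / n ≤ g := by rw [div_le_iff₀ hnpos, mul_comm]; linarith
      have h5 : F S - F (P (i+1)) ≤ (1 - 1/(n:ℝ)) * a := by
        have heq : (1 - 1/(n:ℝ)) * a = a - a / n := by field_simp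
        rw [heq]; linarith
      have hcoef : (0:ℝ) ≤ 1 - 1/(n:ℝ) := by
        have : 1/(n:ℝ) ≤ 1 := by rw [div_le_one hnpos]; exact hn1
        linarith
      calc F S - F (P (i+1)) ≤ (1 - 1/(n:ℝ)) * a := h5
        _ ≤ (1 - 1/(n:ℝ)) * ((1 - 1/(n:ℝ))^i * F S) :=
            mul_le_mul_of_nonneg_left ih' hcoef
        _ = (1 - 1/(n:ℝ))^(i+1) * F S := by ring
  have hpow : (1 - 1/(n:ℝ))^n ≤ 1 / Real.exp 1 := by
    have h1 : 1 - 1/(n:ℝ) ≤ Real.exp (-(1/(n:ℝ))) := by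
      have := Real.add_one_le_exp (-(1/(n:ℝ)))
      linarith
    have hcoef : (0:ℝ) ≤ 1 - 1/(n:ℝ) := by
      have : 1/(n:ℝ) ≤ 1 := by rw [div_le_one hnpos]; exact hn1
      linarith
    calc (1 - 1/(n:ℝ))^n ≤ (Real.exp (-(1/(n:ℝ))))^n := pow_le_pow_left₀ hcoef h1 n
      _ = Real.exp ((n:ℝ) * (-(1/(n:ℝ)))) := (Real.exp_nat_mul _ n).symm
      _ = Real.exp (-1) := by
          congr 1
          field_simp
      _ = 1 / Real.exp 1 := by rw [Real.exp_neg]; rw [one_div]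
  have hfin := ind n le_rfl
  have : (1 - 1/(n:ℝ))^n * F S ≤ (1 / Real.exp 1) * F S :=
    mul_le_mul_of_nonneg_right hpow hFS0
  linarith
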